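/- Let n ≥ 1, p_i > 0 and a_i > 0 for i ≤ n. If λ_i = 1 for all i is a minimizer of ∑_{i=1}^n λ_i^{p_i} a_i subject to ∏_{i=1}^n λ_i = 1 and λ_i > 0, then p_i a_i = p_j a_j for all i, j ≤ n, and this common value equals the weighted geometric mean β = (∏_{i≤n} (p_i a_i)^{1/p_i})^{1/(∑_{i≤n} 1/p_i)}. -/
import Mathlib


open Finset

theorem stmt1 {n : ℕ} (hn : 1 ≤ n) (p a : Fin n → ℝ)
    (hp : ∀ i, 0 < p i) (ha : ∀ i, 0 < a i)
    (hmin : ∀ μ : Fin n → ℝ, (∀ i, 0 < μ i) → (∏ i, μ i = 1) →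
      ∑ i, (1 : ℝ) ^ p i * a i ≤ ∑ i, μ i ^ p i * a i) :
    (∀ i j, p i * a i = p j * a j) ∧
      ∀ i, p i * a i =
        (∏ j, (p j * a j) ^ (1 / p j)) ^ (1 / ∑ j, 1 / p j) := by
  have key : ∀ i j, i ≠ j → p i * a i = p j * a j := by
    intro i j hij
    -- the perturbed function
    set G : ℝ → ℝ := fun t => t ^ p i * a i + t ^ (-p j) * a j with hG
    have hloc : IsLocalMin G 1 := by
      have hmem : Set.Ioi (0:ℝ) ∈ nhds 1 := Ioi_mem_nhds one_pos
      refine Filter.eventually_of_mem hmem ?_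
      intro t ht
      have ht : (0:ℝ) < t := ht
      set μ : Fin n → ℝ := fun k => if k = i then t else if k = j then t⁻¹ else 1 with hμ
      have hpos : ∀ k, 0 < μ k := by
        intro k
        simp only [hμ]
        split_ifs
        · exact ht
        · exact inv_pos.mpr ht
        · exact one_pos
      have hsub : ({i, j} : Finset (Fin n)) ⊆ univ := subset_univ _
      have htail : ∀ k ∈ univ \ ({i, j} : Finset (Fin n)), μ k = 1 := by
        intro k hk
        simp only [mem_sdiff, mem_insert, mem_singleton] at hk
        push_neg at hk
        simp [hμ, hk.2.1, hk.2.2]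
      have hμi : μ i = t := by simp [hμ]
      have hμj : μ j = t⁻¹ := by simp [hμ, hij.symm]
      have hprod : ∏ k, μ k = 1 := by
        rw [← Finset.prod_sdiff hsub, Finset.prod_pair hij, Finset.prod_eq_one htail,
          hμi, hμj, one_mul, mul_inv_cancel₀ ht.ne']
      have h := hmin μ hpos hprod
      rw [← Finset.sum_sdiff hsub, ← Finset.sum_sdiff hsub,
        Finset.sum_pair hij, Finset.sum_pair hij] at h
      have htails : ∑ k ∈ univ \ {i, j}, μ k ^ p k * a k
          = ∑ k ∈ univ \ {i, j}, (1:ℝ) ^ p k * a k :=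
        Finset.sum_congr rfl fun k hk => by rw [htail k hk]
      rw [htails, hμi, hμj] at h
      have hinv : t⁻¹ ^ p j = t ^ (-p j) := by
        rw [Real.inv_rpow ht.le, ← Real.rpow_neg ht.le]
      rw [hinv] at h
      simp only [hG, Real.one_rpow, Real.rpow_neg_one]
      simp only [Real.one_rpow] at h
      linarith
    have hder : HasDerivAt G (p i * (1:ℝ) ^ (p i - 1) * a i + (-p j) * (1:ℝ) ^ (-p j - 1) * a j) 1 :=
      ((Real.hasDerivAt_rpow_const (Or.inl one_ne_zero)).mul_const _).add
        ((Real.hasDerivAt_rpow_const (Or.inl one_ne_zero)).mul_const _)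
    have h0 := hloc.deriv_eq_zero
    rw [hder.deriv] at h0
    simp only [Real.one_rpow] at h0
    nlinarith [h0]
  have key' : ∀ i j, p i * a i = p j * a j := by
    intro i j
    rcases eq_or_ne i j with rfl | h
    · rfl
    · exact key i j h
  refine ⟨key', ?_⟩
  intro i
  have hS : 0 < ∑ j, 1 / p j := by
    have : Nonempty (Fin n) := ⟨⟨0, hn⟩⟩
    exact Finset.sum_pos (fun j _ => one_div_pos.mpr (hp j)) univ_nonempty
  have hc : 0 < p i * a i := mul_pos (hp i) (ha i)
  have hprod : ∏ j, (p j * a j) ^ (1 / p j) = (p i * a i) ^ (∑ j, 1 / p j) := by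
    rw [Real.rpow_sum_of_pos hc]
    exact Finset.prod_congr rfl fun j _ => by rw [key' j i]
  rw [hprod, ← Real.rpow_mul hc.le, mul_one_div, div_self hS.ne', Real.rpow_one]
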